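/- If U : ℝ^d → ℝ is differentiable with L-Lipschitz gradient, satisfies the dissipativity condition ∇U(x)·x ≥ r|x|² − m for all x, and min U = 0, then there exists a constant K > 0 such that (r/3)|x|² − K ≤ U(x) ≤ L|x|² + K for all x ∈ ℝ^d. -/

import Mathlib

open scoped RealInnerProductSpace

lemma hasDerivAt_line_aux (d : ℕ) (U : EuclideanSpace ℝ (Fin d) → ℝ)
    (hdiff : Differentiable ℝ U) (c v : EuclideanSpace ℝ (Fin d)) (t : ℝ) :
    HasDerivAt (fun s : ℝ => U (c + s • v)) ⟪gradient U (c + t • v), v⟫ t := by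
  have h1 : HasDerivAt (fun s : ℝ => c + s • v) v t := by
    simpa using ((hasDerivAt_id t).smul_const v).const_add c
  have h2 := (hdiff (c + t • v)).hasGradientAt.hasFDerivAt
  have h3 := h2.comp_hasDerivAt t h1
  exact h3.congr_deriv (by simp [InnerProductSpace.toDual_apply_apply])

theorem quadratic_growth_of_dissipative
    (d : ℕ) (U : EuclideanSpace ℝ (Fin d) → ℝ) (L r m : ℝ)
    (hL : 0 < L) (hr : 0 < r) (hm : 0 < m)
    (hdiff : Differentiable ℝ U)
    (hlip : LipschitzWith (Real.toNNReal L) (gradient U))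
    (hdiss : ∀ x, r * ‖x‖ ^ 2 - m ≤ ⟪gradient U x, x⟫)
    (hmin0 : ∀ x, 0 ≤ U x) (hmin : ∃ x, U x = 0) :
    ∃ K > 0, ∀ x, (r / 3) * ‖x‖ ^ 2 - K ≤ U x ∧ U x ≤ L * ‖x‖ ^ 2 + K := by
  obtain ⟨x₀, hx₀⟩ := hmin
  have hgrad0 : gradient U x₀ = 0 := by
    have hloc : IsLocalMin U x₀ :=
      Filter.Eventually.of_forall (fun y => by rw [hx₀]; exact hmin0 y)
    have := hloc.fderiv_eq_zero
    simp [gradient, this]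
  refine ⟨L * ‖x₀‖ ^ 2 + m, by positivity, fun x => ?_⟩
  constructor
  · -- lower bound
    set φ : ℝ → ℝ := fun t => U (t • x) - (r * t ^ 2 / 2 * ‖x‖ ^ 2 - 2 * m * t) with hφ
    have hd : ∀ t : ℝ, HasDerivAt φ
        (⟪gradient U (t • x), x⟫ - (r * t * ‖x‖ ^ 2 - 2 * m)) t := by
      intro t
      have h1 : HasDerivAt (fun s : ℝ => U (s • x)) ⟪gradient U (t • x), x⟫ t := by
        have := hasDerivAt_line_aux d U hdiff 0 x t
        simpa [zero_add] using this
      have h2 : HasDerivAt (fun s : ℝ => r * s ^ 2 / 2 * ‖x‖ ^ 2 - 2 * m * s)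
          (r * t * ‖x‖ ^ 2 - 2 * m) t := by
        have hp : HasDerivAt (fun s : ℝ => s ^ 2) (2 * t) t := by
          simpa using hasDerivAt_pow 2 t
        have := (((hp.const_mul r).div_const 2).mul_const (‖x‖ ^ 2)).sub
          ((hasDerivAt_id t).const_mul (2 * m))
        exact this.congr_deriv (by ring)
      exact h1.sub h2
    have hmono : MonotoneOn φ (Set.Icc (1/2 : ℝ) 1) := by
      apply monotoneOn_of_deriv_nonneg (convex_Icc _ _)
      · exact (fun t _ => ((hd t).differentiableAt).continuousAt.continuousWithinAt)
      · exact fun t _ => ((hd t).differentiableAt).differentiableWithinAt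
      · intro t ht
        rw [interior_Icc] at ht
        rw [(hd t).deriv]
        obtain ⟨ht1, ht2⟩ := ht
        have htpos : (0:ℝ) < t := by linarith
        have H := hdiss (t • x)
        rw [real_inner_smul_right, norm_smul] at H
        have hnt : ‖t‖ = t := abs_of_pos htpos
        rw [hnt] at H
        have H' : r * (t ^ 2 * ‖x‖ ^ 2) - m ≤ t * ⟪gradient U (t • x), x⟫ := by
          calc r * (t ^ 2 * ‖x‖ ^ 2) - m = r * (t * ‖x‖) ^ 2 - m := by ring
          _ ≤ _ := H
        nlinarith [sq_nonneg ‖x‖, mul_pos hm htpos]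
    have hkey := hmono (a := 1/2) (b := 1) (by norm_num) (by norm_num) (by norm_num)
    have he1 : φ 1 = U x - (r / 2 * ‖x‖ ^ 2 - 2 * m) := by
      simp only [hφ, one_smul, one_pow]; ring_nf
    have he2 : φ (1/2) = U ((1/2 : ℝ) • x) - (r / 8 * ‖x‖ ^ 2 - m) := by
      simp [hφ]; ring_nf
    rw [he1, he2] at hkey
    have h0 := hmin0 ((1/2 : ℝ) • x)
    nlinarith [sq_nonneg ‖x‖, sq_nonneg ‖x₀‖, mul_pos hL hm]
  · -- upper bound
    set v := x - x₀ with hv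
    set h : ℝ → ℝ := fun t => L * t ^ 2 / 2 * ‖v‖ ^ 2 - U (x₀ + t • v) with hh
    have hd : ∀ t : ℝ, HasDerivAt h
        (L * t * ‖v‖ ^ 2 - ⟪gradient U (x₀ + t • v), v⟫) t := by
      intro t
      have h1 : HasDerivAt (fun s : ℝ => L * s ^ 2 / 2 * ‖v‖ ^ 2) (L * t * ‖v‖ ^ 2) t := by
        have hp : HasDerivAt (fun s : ℝ => s ^ 2) (2 * t) t := by
          simpa using hasDerivAt_pow 2 t
        have := ((hp.const_mul L).div_const 2).mul_const (‖v‖ ^ 2)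
        exact this.congr_deriv (by ring)
      exact h1.sub (hasDerivAt_line_aux d U hdiff x₀ v t)
    have hmono : MonotoneOn h (Set.Icc (0 : ℝ) 1) := by
      apply monotoneOn_of_deriv_nonneg (convex_Icc _ _)
      · exact (fun t _ => ((hd t).differentiableAt).continuousAt.continuousWithinAt)
      · exact fun t _ => ((hd t).differentiableAt).differentiableWithinAt
      · intro t ht
        rw [interior_Icc] at ht
        rw [(hd t).deriv]
        obtain ⟨ht1, ht2⟩ := ht
        have hI : ⟪gradient U (x₀ + t • v), v⟫ ≤ L * t * ‖v‖ ^ 2 := by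
          calc ⟪gradient U (x₀ + t • v), v⟫
              = ⟪gradient U (x₀ + t • v) - gradient U x₀, v⟫ := by rw [hgrad0, sub_zero]
            _ ≤ ‖gradient U (x₀ + t • v) - gradient U x₀‖ * ‖v‖ := real_inner_le_norm _ _
            _ ≤ (L * ‖(x₀ + t • v) - x₀‖) * ‖v‖ := by
                have hlb := hlip.dist_le_mul (x₀ + t • v) x₀
                rw [dist_eq_norm, dist_eq_norm, Real.coe_toNNReal L hL.le] at hlb
                exact mul_le_mul_of_nonneg_right hlb (norm_nonneg _)
            _ = L * t * ‖v‖ ^ 2 := by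
                rw [add_sub_cancel_left, norm_smul, Real.norm_eq_abs, abs_of_pos ht1]
                ring
        linarith
    have hkey := hmono (a := 0) (b := 1) (by norm_num) (by norm_num) (by norm_num)
    have he0 : h 0 = 0 := by simp [hh, hx₀]
    have he1 : h 1 = L / 2 * ‖v‖ ^ 2 - U x := by
      simp only [hh, hv, one_smul, one_pow, add_sub_cancel]
      ring_nf
    rw [he0, he1] at hkey
    have hvle : ‖v‖ ≤ ‖x‖ + ‖x₀‖ := norm_sub_le _ _
    nlinarith [norm_nonneg v, norm_nonneg x, norm_nonneg x₀, sq_nonneg (‖x‖ - ‖x₀‖),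
      mul_le_mul_of_nonneg_left (mul_self_le_mul_self (norm_nonneg v) hvle) hL.le]
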